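/- For k ≥ 1, consider the chained system of complex matrix equations AᵢXᵢBᵢ + CᵢXᵢ₊₁Dᵢ = Eᵢ for i = 1,…,k, with unknowns X₁,…,X_{k+1}. If the system is consistent, then for each i the rank equalities rank[Aᵢ Eᵢ Cᵢ] = rank[Aᵢ Cᵢ] and rank[Bᵢ; Eᵢ; Dᵢ] = rank[Bᵢ; Dᵢ] hold. -/

import Mathlib

open Matrix


lemma myFromColumns_add {m n1 n2 : Type*} (a c : Matrix m n1 ℂ) (b d : Matrix m n2 ℂ) :
    Matrix.fromCols a b + Matrix.fromCols c d = Matrix.fromCols (a + c) (b + d) := by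
  ext _ (_ | _) <;> simp

lemma myFromRows_add {m1 m2 n : Type*} (a c : Matrix m1 n ℂ) (b d : Matrix m2 n ℂ) :
    Matrix.fromRows a b + Matrix.fromRows c d = Matrix.fromRows (a + c) (b + d) := by
  ext (_ | _) _ <;> simp

theorem chained_sylvester_necessary_ranks_one
    (k : ℕ) (hk : 1 ≤ k)
    (m n : Fin k → ℕ) (p q : Fin (k + 1) → ℕ)
    (A : ∀ i : Fin k, Matrix (Fin (m i)) (Fin (p i.castSucc)) ℂ)
    (B : ∀ i : Fin k, Matrix (Fin (q i.castSucc)) (Fin (n i)) ℂ)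
    (C : ∀ i : Fin k, Matrix (Fin (m i)) (Fin (p i.succ)) ℂ)
    (D : ∀ i : Fin k, Matrix (Fin (q i.succ)) (Fin (n i)) ℂ)
    (E : ∀ i : Fin k, Matrix (Fin (m i)) (Fin (n i)) ℂ)
    (X : ∀ j : Fin (k + 1), Matrix (Fin (p j)) (Fin (q j)) ℂ)
    (hX : ∀ i : Fin k, A i * X i.castSucc * B i + C i * X i.succ * D i = E i) :
    ∀ i : Fin k,
      (Matrix.fromCols (A i) (Matrix.fromCols (E i) (C i))).rank =
        (Matrix.fromCols (A i) (C i)).rank ∧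
      (Matrix.fromRows (B i) (Matrix.fromRows (E i) (D i))).rank =
        (Matrix.fromRows (B i) (D i)).rank := by
  intro i
  constructor
  · apply le_antisymm
    · have h1 : Matrix.fromCols (A i) (Matrix.fromCols (E i) (C i)) =
          Matrix.fromCols (A i) (C i) *
            Matrix.fromBlocks 1 (Matrix.fromCols (X i.castSucc * B i) 0)
              0 (Matrix.fromCols (X i.succ * D i) 1) := by
        rw [Matrix.fromCols_mul_fromBlocks]
        simp [Matrix.mul_fromCols, myFromColumns_add, ← Matrix.mul_assoc, hX i]
      rw [h1]
      exact Matrix.rank_mul_le_left _ _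
    · have h2 : Matrix.fromCols (A i) (C i) =
          Matrix.fromCols (A i) (Matrix.fromCols (E i) (C i)) *
            (Matrix.fromBlocks 1 0 (Matrix.fromRows 0 0) (Matrix.fromRows 0 1) :
              Matrix (Fin (p i.castSucc) ⊕ (Fin (n i) ⊕ Fin (p i.succ))) (Fin (p i.castSucc) ⊕ Fin (p i.succ)) ℂ) := by
        rw [Matrix.fromCols_mul_fromBlocks]
        simp [Matrix.fromCols_mul_fromRows]
      rw [h2]
      exact Matrix.rank_mul_le_left _ _
  · apply le_antisymm
    · have h1 : Matrix.fromRows (B i) (Matrix.fromRows (E i) (D i)) =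
          Matrix.fromBlocks 1 0 (Matrix.fromRows (A i * X i.castSucc) 0)
              (Matrix.fromRows (C i * X i.succ) 1) *
            Matrix.fromRows (B i) (D i) := by
        rw [Matrix.fromBlocks_mul_fromRows]
        simp [Matrix.fromRows_mul, myFromRows_add, ← Matrix.mul_assoc, hX i]
      rw [h1]
      exact Matrix.rank_mul_le_right _ _
    · have h2 : Matrix.fromRows (B i) (D i) =
          (Matrix.fromBlocks 1 (Matrix.fromCols 0 0) 0 (Matrix.fromCols 0 1) :
            Matrix (Fin (q i.castSucc) ⊕ Fin (q i.succ)) (Fin (q i.castSucc) ⊕ (Fin (m i) ⊕ Fin (q i.succ))) ℂ) *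
            Matrix.fromRows (B i) (Matrix.fromRows (E i) (D i)) := by
        rw [Matrix.fromBlocks_mul_fromRows]
        simp [Matrix.fromCols_mul_fromRows]
      rw [h2]
      exact Matrix.rank_mul_le_right _ _
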